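/- arXiv:2310.09823 — 3 statements merged into one kernel-verified Lean document; each statement's English description precedes it below -/
import Mathlib

section
/- For every even integer N ≥ 2 and every a > 0, one has ∫₀^∞ e^{−a t²} H_N(t) dt = (√π/2) · (N!/(N/2)!) · a^{−(N+1)/2} · (1−a)^{N/2}. -/
open Real MeasureTheory

/-- Physicists' Hermite polynomials: `H 0 = 1`, `H (n+1) x = 2x H n x - (H n)'(x)`. -/
noncomputable def physHermite : ℕ → ℝ → ℝ
  | 0 => fun _ => 1
  | n + 1 => fun x => 2 * x * physHermite n x - deriv (physHermite n) x

namespace HermiteAux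

open Polynomial Filter Topology Set

/-- Polynomial version of the physicists' Hermite polynomials. -/
noncomputable def HP : ℕ → ℝ[X]
  | 0 => 1
  | n + 1 => 2 * X * HP n - derivative (HP n)

lemma HP_succ (n : ℕ) : HP (n + 1) = 2 * X * HP n - derivative (HP n) := rfl

lemma physHermite_eq (n : ℕ) : physHermite n = fun x => (HP n).eval x := by
  induction n with
  | zero => funext x; simp [physHermite, HP]
  | succ n ih =>
    funext x
    show 2 * x * physHermite n x - deriv (physHermite n) x = _
    rw [ih]
    simp [HP_succ, Polynomial.deriv]

lemma HP_derivative (n : ℕ) :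
    derivative (HP (n + 1)) = 2 * ((n : ℝ[X]) + 1) * HP n := by
  induction n with
  | zero =>
    simp [HP_succ, HP]
  | succ n ih =>
    have hd : derivative (HP n) = 2 * X * HP n - HP (n + 1) := by rw [HP_succ n]; ring
    rw [HP_succ (n + 1), derivative_sub, derivative_mul, ih]
    simp only [derivative_mul, derivative_ofNat, derivative_X, derivative_natCast,
      derivative_one, derivative_add, zero_mul, mul_one, add_zero, zero_add, mul_zero]
    rw [hd]
    push_cast
    ring

lemma HP_eval_neg : ∀ (n : ℕ) (x : ℝ), eval (-x) (HP n) = (-1) ^ n * eval x (HP n)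
  | 0, x => by simp [HP]
  | 1, x => by
    show eval (-x) (2 * X * HP 0 - derivative (HP 0)) = _
    simp [HP]
  | (n + 2), x => by
    have h2 : HP (n + 2) = 2 * X * HP (n + 1) - 2 * ((n : ℝ[X]) + 1) * HP n := by
      rw [HP_succ (n + 1), HP_derivative n]
    rw [h2]
    simp only [eval_sub, eval_mul, eval_ofNat, eval_X, eval_natCast, eval_add, eval_one]
    rw [HP_eval_neg (n + 1) x, HP_eval_neg n x]
    ring

lemma eval_HP_add_two (n : ℕ) (x : ℝ) :
    eval x (HP (n + 2)) = 2 * x * eval x (HP (n + 1)) - 2 * ((n : ℝ) + 1) * eval x (HP n) := by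
  rw [HP_succ (n + 1), HP_derivative n]
  simp

lemma integrable_pow_gauss {b : ℝ} (hb : 0 < b) (n : ℕ) :
    Integrable fun x : ℝ => x ^ n * Real.exp (-b * x ^ 2) := by
  have hIoi : IntegrableOn (fun x : ℝ => x ^ n * Real.exp (-b * x ^ 2)) (Set.Ioi 0) := by
    refine (integrableOn_rpow_mul_exp_neg_mul_sq hb (s := n)
      (by have := Nat.cast_nonneg (α := ℝ) n; linarith)).congr_fun (fun x hx => ?_) measurableSet_Ioi
    simp only [Real.rpow_natCast]
  rw [← integrableOn_univ, ← @Set.Iio_union_Ici _ _ (0 : ℝ), integrableOn_union,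
    integrableOn_Ici_iff_integrableOn_Ioi]
  refine ⟨?_, hIoi⟩
  rw [← (Measure.measurePreserving_neg (volume : Measure ℝ)).integrableOn_comp_preimage
      (Homeomorph.neg ℝ).measurableEmbedding]
  simp only [Function.comp_def, neg_sq, Set.neg_preimage, Set.neg_Iio, neg_neg, neg_zero]
  have heq : (fun x : ℝ => (-x) ^ n * Real.exp (-b * x ^ 2))
      = fun x : ℝ => (-1 : ℝ) ^ n * (x ^ n * Real.exp (-b * x ^ 2)) := by
    funext x; ring
  rw [heq]
  exact hIoi.const_mul _

lemma integrable_poly_gauss {b : ℝ} (hb : 0 < b) (p : ℝ[X]) :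
    Integrable fun x : ℝ => eval x p * Real.exp (-b * x ^ 2) := by
  induction p using Polynomial.induction_on' with
  | monomial n c =>
    simpa [eval_monomial, mul_assoc] using (integrable_pow_gauss hb n).const_mul c
  | add p q hp hq => simpa [add_mul, Pi.add_def] using hp.add hq

lemma tendsto_poly_gauss_atTop {b : ℝ} (hb : 0 < b) (p : ℝ[X]) :
    Tendsto (fun x : ℝ => eval x p * Real.exp (-b * x ^ 2)) atTop (𝓝 0) := by
  have h0 : Tendsto (fun x : ℝ => eval x p * Real.exp (-b * x)) atTop (𝓝 0) := by
    have h1 := (p.comp (C b⁻¹ * X)).tendsto_div_exp_atTop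
    have h2 : Tendsto (fun x : ℝ => b * x) atTop atTop :=
      (tendsto_id (α := ℝ)).const_mul_atTop hb
    refine (h1.comp h2).congr fun x => ?_
    simp only [Function.comp_apply, eval_comp, eval_mul, eval_C, eval_X]
    rw [inv_mul_cancel_left₀ hb.ne', neg_mul, Real.exp_neg, div_eq_mul_inv]
  refine squeeze_zero_norm' ?_ (by simpa using h0.norm)
  filter_upwards [eventually_ge_atTop (1 : ℝ)] with x hx
  have hx2 : x ≤ x ^ 2 := by nlinarith
  have hxx : -b * x ^ 2 ≤ -(b * x) := by nlinarith [mul_le_mul_of_nonneg_left hx2 hb.le]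
  rw [norm_mul, Real.norm_eq_abs, Real.norm_eq_abs, abs_of_pos (Real.exp_pos _)]
  exact mul_le_mul_of_nonneg_left (Real.exp_le_exp.2 hxx) (abs_nonneg _)

lemma tendsto_poly_gauss_atBot {b : ℝ} (hb : 0 < b) (p : ℝ[X]) :
    Tendsto (fun x : ℝ => eval x p * Real.exp (-b * x ^ 2)) atBot (𝓝 0) := by
  have h := (tendsto_poly_gauss_atTop hb (p.comp (-X))).comp tendsto_neg_atBot_atTop
  refine h.congr fun x => ?_
  simp [Function.comp_apply, eval_comp]

lemma hasDerivAt_poly_gauss {b : ℝ} (p : ℝ[X]) (x : ℝ) :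
    HasDerivAt (fun x : ℝ => eval x p * Real.exp (-b * x ^ 2))
      ((eval x (derivative p) - 2 * b * x * eval x p) * Real.exp (-b * x ^ 2)) x := by
  have h1 : HasDerivAt (fun x : ℝ => eval x p) (eval x (derivative p)) x := p.hasDerivAt x
  have h2 : HasDerivAt (fun x : ℝ => -b * x ^ 2) (-b * (2 * x ^ 1)) x :=
    (hasDerivAt_pow 2 x).const_mul (-b)
  have h3 := h2.exp
  have h4 : HasDerivAt (fun x : ℝ => eval x p * Real.exp (-b * x ^ 2)) _ x := h1.mul h3
  convert h4 using 1
  ring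

lemma integral_deriv_gauss_zero {b : ℝ} (hb : 0 < b) (p : ℝ[X]) :
    ∫ x : ℝ, (eval x (derivative p) - 2 * b * x * eval x p) * Real.exp (-b * x ^ 2) = 0 := by
  have hint : Integrable
      (fun x : ℝ => (eval x (derivative p) - 2 * b * x * eval x p) * Real.exp (-b * x ^ 2)) := by
    refine (integrable_poly_gauss hb (derivative p - C (2 * b) * (X * p))).congr ?_
    refine Eventually.of_forall fun x => ?_
    simp [mul_assoc]
  have hIoi := integral_Ioi_of_hasDerivAt_of_tendsto' (a := 0)
    (fun x _ => hasDerivAt_poly_gauss (b := b) p x) hint.integrableOn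
    (tendsto_poly_gauss_atTop hb p)
  have hIic := integral_Iic_of_hasDerivAt_of_tendsto' (a := 0)
    (fun x _ => hasDerivAt_poly_gauss (b := b) p x) hint.integrableOn
    (tendsto_poly_gauss_atBot hb p)
  rw [← intervalIntegral.integral_Iic_add_Ioi (b := 0) hint.integrableOn hint.integrableOn, hIoi, hIic]
  ring

lemma key_rec {a : ℝ} (ha : 0 < a) (n : ℕ) :
    ∫ x : ℝ, eval x (HP (n + 2)) * Real.exp (-a * x ^ 2)
      = 2 * ((n : ℝ) + 1) * (1 - a) / a *
        ∫ x : ℝ, eval x (HP n) * Real.exp (-a * x ^ 2) := by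
  set In := ∫ x : ℝ, eval x (HP n) * Real.exp (-a * x ^ 2) with hIn
  have hintn := integrable_poly_gauss ha (HP n)
  have hintJ : Integrable fun x : ℝ => x * eval x (HP (n + 1)) * Real.exp (-a * x ^ 2) := by
    refine (integrable_poly_gauss ha (X * HP (n + 1))).congr ?_
    exact Eventually.of_forall fun x => by simp
  set J := ∫ x : ℝ, x * eval x (HP (n + 1)) * Real.exp (-a * x ^ 2) with hJ
  have hz := integral_deriv_gauss_zero ha (HP (n + 1))
  have hz' : 2 * ((n : ℝ) + 1) * In - 2 * a * J = 0 := by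
    rw [hIn, hJ, ← integral_const_mul, ← integral_const_mul, ← integral_sub
      (hintn.const_mul _) (hintJ.const_mul _), ← hz]
    congr 1
    funext x
    rw [HP_derivative n]
    simp only [eval_mul, eval_ofNat, eval_add, eval_natCast, eval_one]
    ring
  have hJval : J = ((n : ℝ) + 1) / a * In := by
    field_simp at hz' ⊢
    linarith
  have hsplit : (∫ x : ℝ, eval x (HP (n + 2)) * Real.exp (-a * x ^ 2))
      = 2 * J - 2 * ((n : ℝ) + 1) * In := by
    rw [hIn, hJ, ← integral_const_mul, ← integral_const_mul, ← integral_sub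
      (hintJ.const_mul _) (hintn.const_mul _)]
    congr 1
    funext x
    rw [eval_HP_add_two]
    ring
  rw [hsplit, hJval]
  field_simp

lemma integral_even (a : ℝ) (ha : 0 < a) (m : ℕ) :
    ∫ x : ℝ, eval x (HP (2 * m)) * Real.exp (-a * x ^ 2)
      = Real.sqrt (π / a) *
        ((Nat.factorial (2 * m) : ℝ) / (Nat.factorial m : ℝ)) * ((1 - a) / a) ^ m := by
  induction m with
  | zero => simpa [HP] using integral_gaussian a
  | succ m ih =>
    have h2 : 2 * (m + 1) = 2 * m + 2 := by ring
    rw [h2, key_rec ha (2 * m), ih]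
    have hfac : (Nat.factorial (2 * m + 2) : ℝ)
        = (2 * (m : ℝ) + 2) * (2 * (m : ℝ) + 1) * Nat.factorial (2 * m) := by
      rw [show 2 * m + 2 = (2 * m + 1) + 1 from rfl, Nat.factorial_succ, Nat.factorial_succ]
      push_cast
      ring
    rw [hfac, Nat.factorial_succ]
    have hm : (Nat.factorial m : ℝ) ≠ 0 := Nat.cast_ne_zero.2 (Nat.factorial_ne_zero m)
    have hm1 : ((m : ℝ) + 1) ≠ 0 := by positivity
    have ha0 : a ≠ 0 := ha.ne'
    push_cast
    field_simp
    ring_nf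
    rw [mul_inv_cancel₀ ha0, pow_two, mul_assoc a a, mul_inv_cancel₀ ha0]
    ring

end HermiteAux

theorem integral_exp_mul_hermite (N : ℕ) (hN : 2 ≤ N) (hNe : Even N) (a : ℝ) (ha : 0 < a) :
    ∫ t in Set.Ioi (0 : ℝ), Real.exp (-a * t ^ 2) * physHermite N t =
      Real.sqrt π / 2 * ((Nat.factorial N : ℝ) / (Nat.factorial (N / 2) : ℝ)) *
        a ^ (-((N : ℝ) + 1) / 2) * (1 - a) ^ (N / 2) := by
  classical
  obtain ⟨m, rfl⟩ := hNe
  have hm : m + m = 2 * m := (two_mul m).symm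
  rw [hm]
  open HermiteAux Polynomial in
  have hphys := HermiteAux.physHermite_eq (2 * m)
  have hint := HermiteAux.integrable_poly_gauss ha (HermiteAux.HP (2 * m))
  set F : ℝ → ℝ := fun x => Polynomial.eval x (HermiteAux.HP (2 * m)) * Real.exp (-a * x ^ 2)
    with hF
  have hLHS : (∫ t in Set.Ioi (0 : ℝ), Real.exp (-a * t ^ 2) * physHermite (2 * m) t)
      = ∫ t in Set.Ioi (0 : ℝ), F t := by
    rw [hphys]
    exact integral_congr_ae (Filter.Eventually.of_forall fun t => mul_comm _ _)
  have hIic : (∫ x in Set.Iic (0 : ℝ), F x) = ∫ x in Set.Ioi (0 : ℝ), F x := by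
    have h1 : (∫ x in Set.Iic (0 : ℝ), F x) = ∫ x in Set.Iic (0 : ℝ), F (-x) := by
      refine integral_congr_ae (Filter.Eventually.of_forall fun x => ?_)
      rw [hF]
      simp only [neg_sq]
      rw [HermiteAux.HP_eval_neg, Even.neg_one_pow ⟨m, hm ▸ rfl⟩, one_mul]
    rw [h1, integral_comp_neg_Iic, neg_zero]
  have htot : (∫ x in Set.Iic (0 : ℝ), F x) + (∫ x in Set.Ioi (0 : ℝ), F x) = ∫ x : ℝ, F x :=
    intervalIntegral.integral_Iic_add_Ioi hint.integrableOn hint.integrableOn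
  have hval := HermiteAux.integral_even a ha m
  have hIoi : (∫ x in Set.Ioi (0 : ℝ), F x)
      = (Real.sqrt (π / a) *
        ((Nat.factorial (2 * m) : ℝ) / (Nat.factorial m : ℝ)) * ((1 - a) / a) ^ m) / 2 := by
    rw [hIic] at htot
    rw [← hval, ← htot]
    ring
  rw [hLHS, hIoi]
  have hdiv : 2 * m / 2 = m := by omega
  rw [hdiv]
  have hsa : (0 : ℝ) < Real.sqrt a := Real.sqrt_pos.2 ha
  have h1 : Real.sqrt (π / a) = Real.sqrt π / Real.sqrt a := Real.sqrt_div pi_pos.le a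
  have h2 : a ^ (-(((2 * m : ℕ) : ℝ) + 1) / 2) = (Real.sqrt a * a ^ m)⁻¹ := by
    rw [show -(((2 * m : ℕ) : ℝ) + 1) / 2 = -(1 / 2) + -(m : ℝ) by push_cast; ring]
    rw [Real.rpow_add ha, Real.rpow_neg ha.le, Real.rpow_neg ha.le, Real.rpow_natCast,
      show a ^ ((1 : ℝ) / 2) = Real.sqrt a from (Real.sqrt_eq_rpow a).symm, mul_inv]
  rw [h1, h2, div_pow]
  have hapow : (a : ℝ) ^ m ≠ 0 := pow_ne_zero m ha.ne'
  field_simp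
end

section
/- For τ ∈ (0,1), the parameter λ_τ = ( −2τ(1+τ) log τ / (1−τ) )^{1/2} satisfies 2√τ < λ_τ < 1 + τ. -/
open Real

private lemma log_lt_aux (τ : ℝ) (hτ0 : 0 < τ) (hτ1 : τ < 1) :
    Real.log τ < -(2 * (1 - τ) / (1 + τ)) := by
  set f : ℝ → ℝ := fun x => Real.log x + 2 * (1 - x) / (1 + x) with hf
  have hmono : StrictMonoOn f (Set.Icc τ 1) := by
    apply strictMonoOn_of_deriv_pos (convex_Icc τ 1)
    · apply ContinuousOn.add
      · exact Real.continuousOn_log.mono (by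
          intro x hx
          simp only [Set.mem_compl_iff, Set.mem_singleton_iff]
          exact ne_of_gt (lt_of_lt_of_le hτ0 hx.1))
      · apply ContinuousOn.div (by fun_prop) (by fun_prop)
        intro x hx
        have := hx.1
        nlinarith [hx.1]
    · intro x hx
      rw [interior_Icc] at hx
      obtain ⟨hx1, hx2⟩ := hx
      have hx0 : 0 < x := lt_trans hτ0 hx1
      have h1x : (1 : ℝ) + x ≠ 0 := by nlinarith
      have hd : HasDerivAt f (x⁻¹ + (-2 * (1 + x) - 2 * (1 - x) * 1) / (1 + x) ^ 2) x := by
        apply HasDerivAt.add (Real.hasDerivAt_log (ne_of_gt hx0))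
        have h1 : HasDerivAt (fun x : ℝ => 2 * (1 - x)) (-2) x := by
          simpa using ((hasDerivAt_id x).const_sub 1).const_mul 2
        have h2 : HasDerivAt (fun x : ℝ => 1 + x) 1 x := by
          simpa using (hasDerivAt_id x).const_add 1
        simpa [Pi.div_def] using h1.div h2 h1x
      rw [hd.deriv]
      have : x⁻¹ + (-2 * (1 + x) - 2 * (1 - x) * 1) / (1 + x) ^ 2
          = (1 - x) ^ 2 / (x * (1 + x) ^ 2) := by
        field_simp
        ring
      rw [this]
      apply div_pos (by nlinarith) (by positivity)
  have h := hmono (Set.left_mem_Icc.mpr hτ1.le) (Set.right_mem_Icc.mpr hτ1.le) hτ1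
  simp only [hf, Real.log_one] at h
  have : (1:ℝ) - 1 = 0 := by ring
  rw [this] at h
  simp at h
  linarith

private lemma log_gt_aux (τ : ℝ) (hτ0 : 0 < τ) (hτ1 : τ < 1) :
    (τ ^ 2 - 1) / (2 * τ) < Real.log τ := by
  set g : ℝ → ℝ := fun x => Real.log x - (x ^ 2 - 1) / (2 * x) with hg
  have hanti : StrictAntiOn g (Set.Icc τ 1) := by
    apply strictAntiOn_of_deriv_neg (convex_Icc τ 1)
    · apply ContinuousOn.sub
      · exact Real.continuousOn_log.mono (by
          intro x hx
          simp only [Set.mem_compl_iff, Set.mem_singleton_iff]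
          exact ne_of_gt (lt_of_lt_of_le hτ0 hx.1))
      · apply ContinuousOn.div (by fun_prop) (by fun_prop)
        intro x hx
        have := hx.1
        nlinarith [hx.1]
    · intro x hx
      rw [interior_Icc] at hx
      obtain ⟨hx1, hx2⟩ := hx
      have hx0 : 0 < x := lt_trans hτ0 hx1
      have h2x : (2 : ℝ) * x ≠ 0 := by positivity
      have hd : HasDerivAt g (x⁻¹ - (2 * x * (2 * x) - (x ^ 2 - 1) * 2) / (2 * x) ^ 2) x := by
        apply HasDerivAt.sub (Real.hasDerivAt_log (ne_of_gt hx0))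
        have h1 : HasDerivAt (fun x : ℝ => x ^ 2 - 1) (2 * x) x := by
          simpa using ((hasDerivAt_pow 2 x).sub_const 1)
        have h2 : HasDerivAt (fun x : ℝ => 2 * x) 2 x := by
          simpa using (hasDerivAt_id x).const_mul 2
        simpa [Pi.div_def] using h1.div h2 h2x
      rw [hd.deriv]
      have : x⁻¹ - (2 * x * (2 * x) - (x ^ 2 - 1) * 2) / (2 * x) ^ 2
          = -((x - 1) ^ 2 / (2 * x ^ 2)) := by
        field_simp
        ring
      rw [this]
      have : (0:ℝ) < (x - 1) ^ 2 / (2 * x ^ 2) := by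
        apply div_pos (by nlinarith) (by positivity)
      linarith
  have h := hanti (Set.left_mem_Icc.mpr hτ1.le) (Set.right_mem_Icc.mpr hτ1.le) hτ1
  simp only [hg, Real.log_one] at h
  norm_num at h
  linarith

theorem lambda_tau_bounds (τ : ℝ) (hτ0 : 0 < τ) (hτ1 : τ < 1) :
    2 * Real.sqrt τ < Real.sqrt (-2 * τ * (1 + τ) * Real.log τ / (1 - τ)) ∧
    Real.sqrt (-2 * τ * (1 + τ) * Real.log τ / (1 - τ)) < 1 + τ := by
  have h1τ : (0:ℝ) < 1 - τ := by linarith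
  have h1p : (0:ℝ) < 1 + τ := by linarith
  have hlog1 := log_lt_aux τ hτ0 hτ1
  have hlog2 := log_gt_aux τ hτ0 hτ1
  constructor
  · have h4 : 4 * τ < -2 * τ * (1 + τ) * Real.log τ / (1 - τ) := by
      rw [lt_div_iff₀ h1τ]
      have : Real.log τ * (1 + τ) < -(2 * (1 - τ)) := by
        rw [show -(2 * (1 - τ) / (1 + τ)) = (-(2 * (1 - τ))) / (1 + τ) by ring,
          lt_div_iff₀ h1p] at hlog1
        exact hlog1
      nlinarith
    calc 2 * Real.sqrt τ = Real.sqrt (4 * τ) := by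
          rw [show (4:ℝ) * τ = 2 ^ 2 * τ by norm_num, Real.sqrt_mul (by positivity),
            Real.sqrt_sq (by norm_num : (0:ℝ) ≤ 2)]
      _ < _ := Real.sqrt_lt_sqrt (by positivity) h4
  · rw [Real.sqrt_lt' h1p, div_lt_iff₀ h1τ]
    rw [div_lt_iff₀ (by positivity : (0:ℝ) < 2 * τ)] at hlog2
    nlinarith
end

section
/- For an even integer N and τ ∈ (0,1], the function R_N¹(x) = √(N/(2π)) e^{−Nx²/(1+τ)} Σ_{k=0}^{N−2} ((τ/2)^k/k!) H_k(√(N/(2τ)) x)² has derivative (R_N¹)′(x) = −√(2/π) · ((τ/2)^{N−3/2}/(1+τ)) · (N/(N−2)!) · e^{−Nx²/(1+τ)} · H_{N−2}(√(N/(2τ)) x) · H_{N−1}(√(N/(2τ)) x). -/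
open Real

open Polynomial

noncomputable def PH : ℕ → Polynomial ℝ
  | 0 => 1
  | n + 1 => 2 * X * PH n - derivative (PH n)

lemma C_two : (C (2:ℝ) : Polynomial ℝ) = 2 := map_ofNat C 2

lemma physHermite_eq (n : ℕ) : physHermite n = fun x => (PH n).eval x := by
  induction n with
  | zero => funext x; simp [physHermite, PH]
  | succ n ih =>
      funext x
      simp only [physHermite, PH, ih, Polynomial.deriv]
      simp [mul_assoc]

lemma PH_derivative (n : ℕ) : derivative (PH (n + 1)) = C ((2 : ℝ) * (n + 1)) * PH n := by
  induction n with
  | zero => simp [PH, C_two]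
  | succ n ih =>
      have h1 : PH (n + 2) = 2 * X * PH (n + 1) - derivative (PH (n + 1)) := rfl
      have h2 : PH (n + 1) = 2 * X * PH n - derivative (PH n) := rfl
      have hC : (C ((2:ℝ) * (↑n + 1 + 1)) : Polynomial ℝ) = C ((2:ℝ) * (n + 1)) + 2 := by
        rw [show (2:ℝ) * (↑n + 1 + 1) = 2 * (↑n + 1) + 2 by ring, C_add, C_two]
      rw [h1, derivative_sub, derivative_mul, derivative_mul, ih, derivative_mul,
        derivative_C, derivative_X]
      push_cast
      rw [hC, h2]
      simp only [derivative_ofNat]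
      ring

lemma hasDerivAt_physHermite (n : ℕ) (x : ℝ) :
    HasDerivAt (physHermite n) (2 * n * physHermite (n - 1) x) x := by
  match n with
  | 0 =>
      simp only [physHermite_eq, PH, Nat.cast_zero]
      simpa using (Polynomial.hasDerivAt (1 : Polynomial ℝ) x)
  | n + 1 =>
      simp only [physHermite_eq]
      have := Polynomial.hasDerivAt (PH (n+1)) x
      rw [PH_derivative] at this
      simpa [Nat.succ_sub_one] using this

lemma physHermite_zero' (u : ℝ) : physHermite 0 u = 1 := rfl

lemma physHermite_succ (n : ℕ) (u : ℝ) :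
    physHermite (n + 1) u = 2 * u * physHermite n u - 2 * n * physHermite (n - 1) u := by
  show 2 * u * physHermite n u - deriv (physHermite n) u = _
  rw [(hasDerivAt_physHermite n u).deriv]

noncomputable def Gaux (C t u : ℝ) : ℕ → ℝ
  | 0 => 0
  | j + 1 => C * t ^ j / (Nat.factorial j : ℝ) * physHermite j u * physHermite (j + 1) u

lemma term_eq (τ c x : ℝ) (hτ0 : 0 < τ) (n : ℝ) (hn : n = 2 * τ * c ^ 2)
    (k : ℕ) :
    (-n * (2 * x ^ 1) / (1 + τ)) * ((τ/2) ^ k / (Nat.factorial k : ℝ) * (physHermite k (c * x)) ^ 2)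
      + (τ/2) ^ k / (Nat.factorial k : ℝ) *
        ((2:ℕ) * (physHermite k (c * x)) ^ 1 * (2 * k * physHermite (k-1) (c * x) * c))
      = Gaux (2 * τ * c / (1 + τ)) (τ/2) (c * x) k
        - Gaux (2 * τ * c / (1 + τ)) (τ/2) (c * x) (k + 1) := by
  have h1τ : (1:ℝ) + τ ≠ 0 := by positivity
  match k with
  | 0 =>
      simp only [Gaux, physHermite_zero', physHermite_succ 0, Nat.cast_zero, hn]
      field_simp
      ring
  | j + 1 =>
      have hfac : (Nat.factorial (j+1) : ℝ) = (j+1) * (Nat.factorial j : ℝ) := by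
        rw [Nat.factorial_succ]; push_cast; ring
      have hrec := physHermite_succ (j + 1) (c * x)
      simp only [Nat.succ_sub_one] at hrec ⊢
      simp only [Gaux, hrec, hn, hfac]
      have hfj : (Nat.factorial j : ℝ) ≠ 0 := by positivity
      have hj1 : ((j:ℝ) + 1) ≠ 0 := by positivity
      push_cast
      field_simp
      ring

lemma const_eq (τ : ℝ) (hτ : 0 < τ) (n : ℝ) (hn : 0 < n) :
    Real.sqrt (n / (2 * π)) * (2 * τ * Real.sqrt (n / (2 * τ)))
      = Real.sqrt (2 / π) * Real.sqrt (τ / 2) * n := by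
  have hπ := Real.pi_pos
  have h1 : Real.sqrt (n/(2*π)) * Real.sqrt (n/(2*τ))
      = Real.sqrt ((n/(2*τ))^2 * ((2/π)*(τ/2))) := by
    rw [← Real.sqrt_mul (by positivity)]
    congr 1
    field_simp
  have h2 : Real.sqrt ((n/(2*τ))^2 * ((2/π)*(τ/2)))
      = (n/(2*τ)) * (Real.sqrt (2/π) * Real.sqrt (τ/2)) := by
    rw [Real.sqrt_mul (by positivity), Real.sqrt_sq (by positivity),
      Real.sqrt_mul (by positivity)]
  calc Real.sqrt (n/(2*π)) * (2*τ*Real.sqrt (n/(2*τ)))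
      = 2*τ*(Real.sqrt (n/(2*π)) * Real.sqrt (n/(2*τ))) := by ring
    _ = 2*τ*((n/(2*τ)) * (Real.sqrt (2/π) * Real.sqrt (τ/2))) := by rw [h1, h2]
    _ = _ := by field_simp

theorem RN1_deriv (N : ℕ) (hN : 2 ≤ N) (hNe : Even N) (τ : ℝ) (hτ0 : 0 < τ) (hτ1 : τ ≤ 1)
    (x : ℝ) :
    deriv (fun y : ℝ => Real.sqrt ((N : ℝ) / (2 * π)) * Real.exp (-(N : ℝ) * y ^ 2 / (1 + τ)) *
        ∑ k ∈ Finset.range (N - 1),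
          (τ / 2) ^ k / (Nat.factorial k : ℝ) *
            (physHermite k (Real.sqrt ((N : ℝ) / (2 * τ)) * y)) ^ 2) x
      = -Real.sqrt (2 / π) * ((τ / 2) ^ ((N : ℝ) - 3 / 2) / (1 + τ)) *
          ((N : ℝ) / (Nat.factorial (N - 2) : ℝ)) * Real.exp (-(N : ℝ) * x ^ 2 / (1 + τ)) *
          physHermite (N - 2) (Real.sqrt ((N : ℝ) / (2 * τ)) * x) *
          physHermite (N - 1) (Real.sqrt ((N : ℝ) / (2 * τ)) * x) := by
  obtain ⟨M, rfl⟩ : ∃ M, N = M + 2 := ⟨N - 2, by omega⟩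
  have e1 : M + 2 - 1 = M + 1 := rfl
  have e2 : M + 2 - 2 = M := rfl
  rw [e1, e2]
  set c : ℝ := Real.sqrt (((M + 2 : ℕ) : ℝ) / (2 * τ)) with hc_def
  set A : ℝ := Real.sqrt (((M + 2 : ℕ) : ℝ) / (2 * π)) with hA_def
  have hNpos : (0:ℝ) < ((M + 2 : ℕ) : ℝ) := by positivity
  have hc0 : 0 < c := Real.sqrt_pos.mpr (by positivity)
  have hc2 : ((M + 2 : ℕ) : ℝ) = 2 * τ * c ^ 2 := by
    rw [hc_def, Real.sq_sqrt (by positivity)]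
    field_simp
  have h1τ : (1:ℝ) + τ ≠ 0 := by positivity
  -- derivative computation
  have hkd : ∀ k : ℕ, HasDerivAt (fun y : ℝ => (τ/2) ^ k / (Nat.factorial k : ℝ) *
      (physHermite k (c * y)) ^ 2)
      ((τ/2) ^ k / (Nat.factorial k : ℝ) *
        ((2:ℕ) * (physHermite k (c * x)) ^ 1 * (2 * k * physHermite (k-1) (c * x) * c))) x := by
    intro k
    have h1 : HasDerivAt (fun y : ℝ => c * y) c x := by
      simpa using (hasDerivAt_id x).const_mul c
    have h2 : HasDerivAt (fun y : ℝ => physHermite k (c * y))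
        (2 * k * physHermite (k-1) (c * x) * c) x :=
      (hasDerivAt_physHermite k (c * x)).comp x h1
    exact (h2.pow 2).const_mul _
  have hsum : HasDerivAt (fun y : ℝ => ∑ k ∈ Finset.range (M + 1),
      (τ/2) ^ k / (Nat.factorial k : ℝ) * (physHermite k (c * y)) ^ 2)
      (∑ k ∈ Finset.range (M + 1), (τ/2) ^ k / (Nat.factorial k : ℝ) *
        ((2:ℕ) * (physHermite k (c * x)) ^ 1 * (2 * k * physHermite (k-1) (c * x) * c))) x :=
    HasDerivAt.fun_sum (fun k _ => hkd k)
  have hE : HasDerivAt (fun y : ℝ => Real.exp (-((M+2:ℕ):ℝ) * y ^ 2 / (1 + τ)))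
      (Real.exp (-((M+2:ℕ):ℝ) * x ^ 2 / (1 + τ)) * (-((M+2:ℕ):ℝ) * (2 * x ^ 1) / (1 + τ))) x :=
    (((hasDerivAt_pow 2 x).const_mul (-((M+2:ℕ):ℝ))).div_const (1+τ)).exp
  have hD : HasDerivAt (fun y : ℝ => A * Real.exp (-((M+2:ℕ):ℝ) * y ^ 2 / (1 + τ)) *
      ∑ k ∈ Finset.range (M + 1),
        (τ/2) ^ k / (Nat.factorial k : ℝ) * (physHermite k (c * y)) ^ 2)
      ((A * (Real.exp (-((M+2:ℕ):ℝ) * x ^ 2 / (1 + τ)) * (-((M+2:ℕ):ℝ) * (2 * x ^ 1) / (1 + τ)))) *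
          (∑ k ∈ Finset.range (M + 1),
            (τ/2) ^ k / (Nat.factorial k : ℝ) * (physHermite k (c * x)) ^ 2)
        + (A * Real.exp (-((M+2:ℕ):ℝ) * x ^ 2 / (1 + τ))) *
          (∑ k ∈ Finset.range (M + 1), (τ/2) ^ k / (Nat.factorial k : ℝ) *
            ((2:ℕ) * (physHermite k (c * x)) ^ 1 * (2 * k * physHermite (k-1) (c * x) * c)))) x :=
    (hE.const_mul A).mul hsum
  rw [hD.deriv]
  set E := Real.exp (-((M+2:ℕ):ℝ) * x ^ 2 / (1 + τ)) with hE_def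
  calc (A * (E * (-((M+2:ℕ):ℝ) * (2 * x ^ 1) / (1 + τ)))) *
          (∑ k ∈ Finset.range (M + 1),
            (τ/2) ^ k / (Nat.factorial k : ℝ) * (physHermite k (c * x)) ^ 2)
        + (A * E) *
          (∑ k ∈ Finset.range (M + 1), (τ/2) ^ k / (Nat.factorial k : ℝ) *
            ((2:ℕ) * (physHermite k (c * x)) ^ 1 * (2 * k * physHermite (k-1) (c * x) * c)))
      = A * E * (∑ k ∈ Finset.range (M + 1),
          ((-((M+2:ℕ):ℝ) * (2 * x ^ 1) / (1 + τ)) *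
              ((τ/2) ^ k / (Nat.factorial k : ℝ) * (physHermite k (c * x)) ^ 2)
            + (τ/2) ^ k / (Nat.factorial k : ℝ) *
              ((2:ℕ) * (physHermite k (c * x)) ^ 1 * (2 * k * physHermite (k-1) (c * x) * c)))) := by
        rw [Finset.sum_add_distrib, ← Finset.mul_sum]
        ring
    _ = A * E * (∑ k ∈ Finset.range (M + 1),
          (Gaux (2 * τ * c / (1 + τ)) (τ/2) (c * x) k
            - Gaux (2 * τ * c / (1 + τ)) (τ/2) (c * x) (k + 1))) := by
        rw [Finset.sum_congr rfl fun k _ => term_eq τ c x hτ0 _ hc2 k]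
    _ = A * E * (Gaux (2 * τ * c / (1 + τ)) (τ/2) (c * x) 0
          - Gaux (2 * τ * c / (1 + τ)) (τ/2) (c * x) (M + 1)) := by
        rw [Finset.sum_range_sub']
    _ = -Real.sqrt (2 / π) * ((τ / 2) ^ (((M+2:ℕ) : ℝ) - 3 / 2) / (1 + τ)) *
          (((M+2:ℕ) : ℝ) / (Nat.factorial M : ℝ)) * E *
          physHermite M (c * x) * physHermite (M + 1) (c * x) := by
        have hrpow : (τ/2 : ℝ) ^ ((((M+2:ℕ)):ℝ) - 3/2)
            = (τ/2)^M * Real.sqrt (τ/2) := by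
          rw [show (((M+2:ℕ)):ℝ) - 3/2 = (M:ℝ) + 1/2 by push_cast; ring,
            Real.rpow_add (by positivity), Real.rpow_natCast, Real.sqrt_eq_rpow]
        have hconst := const_eq τ hτ0 ((M+2:ℕ):ℝ) hNpos
        rw [← hc_def, ← hA_def] at hconst
        simp only [Gaux]
        rw [hrpow]
        have hM : (Nat.factorial M : ℝ) ≠ 0 := by positivity
        linear_combination (-(E * (τ/2)^M * physHermite M (c*x) * physHermite (M+1) (c*x)
          / (1+τ) / (Nat.factorial M : ℝ))) * hconst
end
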